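/- Let α, β, c be real parameters. For every real polynomial p there exists a real polynomial q with deg q ≤ deg p + 1 such that for every x ≠ 0, (𝔕 p)(x) = q(x); that is, the raising operator 𝔕 maps any polynomial of degree n to a polynomial of degree at most n + 1. -/

import Mathlib

noncomputable section

/-- The raising operator `𝔕`: acts on `f` at `x ≠ 0` by
`S₁(x) f(x) + S₂(x) f(-x) + T₁(x) f'(x) - T₂(x) f'(-x)`. -/
noncomputable def Rop (α β c : ℝ) (f : ℝ → ℝ) (x : ℝ) : ℝ :=
  ((β * c - β - 2 * α) * x - (c + 2) * (c - 1)
      + (β - 2 * c ^ 2 + 2 * c ^ 2 * α - β * c) / x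
      - c * (c - 1) / x ^ 2 + 2 * c ^ 2 / x ^ 3) * f x
    + ((β * c - β + 2 * c * α) * x + (c - 1) * (2 * c * α - c - 2 * β)
      + (-β - 2 * c ^ 2 * α + β * c + 2 * c ^ 2) / x
      + c * (c - 1) / x ^ 2 - 2 * c ^ 2 / x ^ 3) * f (-x)
    + (2 * (x ^ 2 - 1) * (c ^ 2 - x ^ 2) / x ^ 2) * deriv f x
    - (2 * c * (1 + x) * (x - 1) ^ 2 * (x + c) / x ^ 2) * deriv f (-x)

open Polynomial

namespace RopAux

/-- `x^3 · S₁(x)` as a polynomial. -/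
def s1 (α β c : ℝ) : ℝ[X] :=
  C (β * c - β - 2 * α) * X ^ 4 - C ((c + 2) * (c - 1)) * X ^ 3
    + C (β - 2 * c ^ 2 + 2 * c ^ 2 * α - β * c) * X ^ 2
    - C (c * (c - 1)) * X + C (2 * c ^ 2)

/-- `x^3 · S₂(x)` as a polynomial. -/
def s2 (α β c : ℝ) : ℝ[X] :=
  C (β * c - β + 2 * c * α) * X ^ 4 + C ((c - 1) * (2 * c * α - c - 2 * β)) * X ^ 3
    + C (-β - 2 * c ^ 2 * α + β * c + 2 * c ^ 2) * X ^ 2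
    + C (c * (c - 1)) * X - C (2 * c ^ 2)

/-- `x^2 · T₁(x)` as a polynomial. -/
def t1 (c : ℝ) : ℝ[X] := C 2 * (X ^ 2 - 1) * (C (c ^ 2) - X ^ 2)

/-- `x^2 · T₂(x)` as a polynomial. -/
def t2 (c : ℝ) : ℝ[X] := C (2 * c) * (1 + X) * (X - 1) ^ 2 * (X + C c)

/-- `x^3 · (𝔕 p)(x)` as a polynomial in `x`. -/
def Aop (α β c : ℝ) (p : ℝ[X]) : ℝ[X] :=
  s1 α β c * p + s2 α β c * (p.comp (-X)) + X * t1 c * p.derivative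
    - X * t2 c * (p.derivative.comp (-X))

lemma Aop_add (α β c : ℝ) (p q : ℝ[X]) :
    Aop α β c (p + q) = Aop α β c p + Aop α β c q := by
  simp only [Aop, add_comp, derivative_add]
  ring

lemma Aop_C_mul (α β c a : ℝ) (p : ℝ[X]) :
    Aop α β c (C a * p) = C a * Aop α β c p := by
  simp only [Aop, mul_comp, C_comp, derivative_C_mul]
  ring

lemma dvd_Aop_pow (α β c : ℝ) (n : ℕ) : (X : ℝ[X]) ^ 3 ∣ Aop α β c (X ^ n) := by
  match n with
  | 0 =>
    refine ⟨C (2 + 2*α*c^2 - 2*β*c - 2*c^2 - 2*α*c + 2*β)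
      + C (2*β*c - 2*β - 2*α + 2*α*c) * X, Polynomial.funext fun x => ?_⟩
    simp [Aop, s1, s2, t1, t2]
    ring
  | 1 =>
    refine ⟨C (2*β + 4*α*c^2 - 2*β*c + 2 + 2*c)
      + C (-2*c^2 + 2 - 2*α*c^2 + 2*β*c + 2*α*c - 2*β) * X
      + C (-2*α - 2*α*c - 2 - 2*c) * X ^ 2, Polynomial.funext fun x => ?_⟩
    simp [Aop, s1, s2, t1, t2]
    ring
  | 2 =>
    refine ⟨C (-4*c^2 + 4*c) + C (4 - 4*c) * X
      + C (2*c^2 + 2 + 2*α*c^2 - 2*β*c - 2*α*c + 2*β - 4*c) * X ^ 2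
      + C (2*β*c - 2*β - 2*α + 2*α*c - 4 + 4*c) * X ^ 3, Polynomial.funext fun x => ?_⟩
    simp [Aop, s1, s2, t1, t2]
    ring
  | (m + 3) =>
    refine ⟨s1 α β c * X ^ m - s2 α β c * (-X) ^ m
      + C ((m + 3 : ℕ) : ℝ) * t1 c * X ^ m
      - C ((m + 3 : ℕ) : ℝ) * t2 c * (-X) ^ m, ?_⟩
    simp only [Aop, X_pow_comp, derivative_X_pow, mul_comp, C_comp]
    rw [show m + 3 - 1 = m + 2 from rfl]
    ring

lemma dvd_Aop (α β c : ℝ) (p : ℝ[X]) : (X : ℝ[X]) ^ 3 ∣ Aop α β c p := by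
  induction p using Polynomial.induction_on' with
  | add p q hp hq => rw [Aop_add]; exact dvd_add hp hq
  | monomial n a =>
    rw [← C_mul_X_pow_eq_monomial, Aop_C_mul]
    exact Dvd.dvd.mul_left (dvd_Aop_pow α β c n) _

lemma natDegree_s1_le (α β c : ℝ) : (s1 α β c).natDegree ≤ 4 := by
  unfold s1; compute_degree

lemma natDegree_s2_le (α β c : ℝ) : (s2 α β c).natDegree ≤ 4 := by
  unfold s2; compute_degree

lemma natDegree_t1_le (c : ℝ) : (t1 c).natDegree ≤ 4 := by
  unfold t1; compute_degree

lemma natDegree_t2_le (c : ℝ) : (t2 c).natDegree ≤ 4 := by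
  unfold t2; compute_degree

lemma natDegree_pos_of_derivative_ne_zero (p : ℝ[X]) (h : p.derivative ≠ 0) :
    1 ≤ p.natDegree := by
  by_contra h'
  push_neg at h'
  obtain ⟨a, rfl⟩ := Polynomial.natDegree_eq_zero.mp (Nat.lt_one_iff.mp h')
  simp at h

lemma natDegree_Aop_le (α β c : ℝ) (p : ℝ[X]) :
    (Aop α β c p).natDegree ≤ p.natDegree + 4 := by
  have hnX : (-X : ℝ[X]).natDegree = 1 := by simp
  have h1 : (s1 α β c * p).natDegree ≤ p.natDegree + 4 := by
    refine le_trans (natDegree_mul_le) ?_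
    have := natDegree_s1_le α β c; omega
  have h2 : (s2 α β c * (p.comp (-X))).natDegree ≤ p.natDegree + 4 := by
    refine le_trans (natDegree_mul_le) ?_
    have := natDegree_s2_le α β c
    have hc : (p.comp (-X)).natDegree = p.natDegree := by
      rw [natDegree_comp, hnX, mul_one]
    omega
  have h3 : (X * t1 c * p.derivative).natDegree ≤ p.natDegree + 4 := by
    by_cases hd : p.derivative = 0
    · simp [hd]
    · have h1' := natDegree_pos_of_derivative_ne_zero p hd
      have hdle := Polynomial.natDegree_derivative_le p
      refine le_trans (natDegree_mul_le) ?_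
      have := le_trans (natDegree_mul_le (p := (X : ℝ[X])) (q := t1 c))
        (Nat.add_le_add_left (natDegree_t1_le c) _)
      have hX : (X : ℝ[X]).natDegree = 1 := natDegree_X
      omega
  have h4 : (X * t2 c * (p.derivative.comp (-X))).natDegree ≤ p.natDegree + 4 := by
    by_cases hd : p.derivative = 0
    · simp [hd]
    · have h1' := natDegree_pos_of_derivative_ne_zero p hd
      have hdle := Polynomial.natDegree_derivative_le p
      have hc : (p.derivative.comp (-X)).natDegree = p.derivative.natDegree := by
        rw [natDegree_comp, hnX, mul_one]
      refine le_trans (natDegree_mul_le) ?_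
      have := le_trans (natDegree_mul_le (p := (X : ℝ[X])) (q := t2 c))
        (Nat.add_le_add_left (natDegree_t2_le c) _)
      have hX : (X : ℝ[X]).natDegree = 1 := natDegree_X
      omega
  refine le_trans (natDegree_sub_le _ _) (max_le ?_ h4)
  exact le_trans (natDegree_add_le _ _)
    (max_le (le_trans (natDegree_add_le _ _) (max_le h1 h2)) h3)

end RopAux

open RopAux in
/-- The raising operator `𝔕` maps any polynomial of degree `n` to a polynomial
of degree at most `n + 1`. -/
theorem R_raises_degree_by_one (α β c : ℝ) (p : Polynomial ℝ) :
    ∃ q : Polynomial ℝ, q.degree ≤ p.degree + 1 ∧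
      ∀ x : ℝ, x ≠ 0 → Rop α β c (fun t => p.eval t) x = q.eval x := by
  by_cases hp0 : p = 0
  · refine ⟨0, by simp, fun x hx => ?_⟩
    subst hp0
    simp [Rop]
  obtain ⟨q, hq⟩ := dvd_Aop α β c p
  refine ⟨q, ?_, fun x hx => ?_⟩
  · by_cases hq0 : q = 0
    · simp [hq0]
    · have hdeg : 3 + q.natDegree ≤ p.natDegree + 4 := by
        have h1 : (Aop α β c p).natDegree = 3 + q.natDegree := by
          rw [hq, natDegree_mul (pow_ne_zero 3 X_ne_zero) hq0, natDegree_X_pow]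
        have h2 := natDegree_Aop_le α β c p
        omega
      have hqn : q.natDegree ≤ p.natDegree + 1 := by omega
      calc q.degree ≤ (q.natDegree : WithBot ℕ) := degree_le_natDegree
        _ ≤ ((p.natDegree + 1 : ℕ) : WithBot ℕ) := by exact_mod_cast hqn
        _ = p.degree + 1 := by
            rw [degree_eq_natDegree hp0]
            push_cast
            rfl
  · have hx3 : x ^ 3 ≠ 0 := pow_ne_zero _ hx
    have hA : (Aop α β c p).eval x = x ^ 3 * q.eval x := by
      rw [hq]; simp
    have hL : Rop α β c (fun t => p.eval t) x = (Aop α β c p).eval x / x ^ 3 := by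
      simp only [Rop, Polynomial.deriv]
      simp only [Aop, s1, s2, t1, t2, eval_add, eval_sub, eval_mul, eval_comp,
        eval_pow, eval_neg, eval_X, eval_C, eval_one]
      field_simp
    rw [hL, hA, mul_comm, mul_div_assoc, div_self hx3, mul_one]
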